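/- Suppose r ≥ 3 and n = α_1+⋯+α_r ≥ 4, and set d* = max{α_1(q−2), …, α_r(q−2), ⌈(n−1)(q−2)/2⌉}. Then for every integer d ≥ 0, the dimension over K of the degree-d homogeneous component of S/I(X) equals (q−1)^{n−1} if and only if d ≥ d*. (Equivalently, since S/I(X) is a 1-dimensional Cohen–Macaulay graded ring whose Hilbert function strictly increases until it reaches the constant value |X| = (q−1)^{n−1}, the Castelnuovo–Mumford regularity of S/I(X) equals d*.) -/

import Mathlib

open MvPolynomial

/-- The value `x^e = x_i * x_j` of an unordered pair `e = {i,j}` of vertices. -/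
noncomputable def edgeVal {V K : Type*} [CommMonoid K] (x : V → K) (e : Sym2 V) : K :=
  Sym2.lift ⟨fun i j => x i * x j, fun i j => mul_comm _ _⟩ e

/-- The vanishing ideal `I(X)` of the algebraic toric set `X` parameterized by the
edges of the graph `G`: the ideal generated by all homogeneous polynomials vanishing
on all points `(x^{e_1}, …, x^{e_s})` with `x ∈ (K*)^n`. -/
noncomputable def vanishingIdeal (K : Type*) [Field K] {V : Type*} (G : SimpleGraph V) :
    Ideal (MvPolynomial G.edgeSet K) :=
  Ideal.span {f | (∃ d, f.IsHomogeneous d) ∧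
    ∀ x : V → Kˣ,
      MvPolynomial.eval (fun e : G.edgeSet => edgeVal (fun v => (x v : K)) (e : Sym2 V)) f = 0}

/-- The Hilbert function of `S/I(X)`: the `K`-dimension of the degree-`d` homogeneous
component of `S/I(X)`, i.e. of the quotient of the space of homogeneous polynomials of
degree `d` by its subspace of elements lying in `I(X)`. -/
noncomputable def hilbFn (K : Type*) [Field K] {V : Type*} (G : SimpleGraph V) (d : ℕ) : ℕ :=
  Module.finrank K
    (↥(homogeneousSubmodule G.edgeSet K d) ⧸
      Submodule.comap (homogeneousSubmodule G.edgeSet K d).subtype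
        ((vanishingIdeal K G).restrictScalars K))


namespace Stmt8

variable {V : Type*} [DecidableEq V]

def mult (v : V) (e : Sym2 V) : ℕ :=
  Sym2.lift ⟨fun i j => (if i = v then 1 else 0) + (if j = v then 1 else 0),
    fun _ _ => by dsimp only; omega⟩ e

@[simp] lemma mult_mk (v i j : V) :
    mult v (s(i, j)) = (if i = v then 1 else 0) + (if j = v then 1 else 0) := rfl

lemma edgeVal_eq_prod {K : Type*} [CommMonoid K] [Fintype V] (x : V → K) (e : Sym2 V) :
    edgeVal x e = ∏ v, x v ^ mult v e := by
  induction e using Sym2.inductionOn with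
  | hf i j =>
    show x i * x j = _
    simp only [mult_mk, pow_add, pow_ite, pow_one, pow_zero]
    rw [Finset.prod_mul_distrib, Finset.prod_ite_eq, Finset.prod_ite_eq]
    simp

lemma sum_mult [Fintype V] (e : Sym2 V) : ∑ v, mult v e = 2 := by
  induction e using Sym2.inductionOn with
  | hf i j =>
    simp only [mult_mk, Finset.sum_add_distrib, Finset.sum_ite_eq, Finset.mem_univ, if_true]

section degVec
variable {G : SimpleGraph V}

/-- degree of vertex `v` in the edge multiset `a`. -/
def degVec (a : G.edgeSet →₀ ℕ) (v : V) : ℕ := a.sum fun e k => k * mult v (e : Sym2 V)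

lemma degVec_add (a b : G.edgeSet →₀ ℕ) (v : V) :
    degVec (a + b) v = degVec a v + degVec b v := by
  classical
  exact Finsupp.sum_add_index (by simp) (by intros; ring)

lemma degVec_single (e : G.edgeSet) (k : ℕ) (v : V) :
    degVec (Finsupp.single e k) v = k * mult v (e : Sym2 V) := by
  classical
  exact Finsupp.sum_single_index (by simp)

lemma sum_degVec [Fintype V] (a : G.edgeSet →₀ ℕ) :
    ∑ v, degVec a v = 2 * a.degree := by
  classical
  unfold degVec
  simp only [Finsupp.sum]
  rw [Finset.sum_comm]
  have : ∀ e ∈ a.support, ∑ v : V, a e * mult v (e : Sym2 V) = 2 * a e := by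
    intro e _
    rw [← Finset.mul_sum, sum_mult]; ring
  rw [Finset.sum_congr rfl this, ← Finset.mul_sum]
  rfl

lemma partsum_degVec [Fintype V] {ι : Type*} [DecidableEq ι] (p : V → ι)
    (hAdj : ∀ x y, G.Adj x y ↔ p x ≠ p y) (i : ι) (a : G.edgeSet →₀ ℕ) :
    ∑ v ∈ Finset.univ.filter (fun v => p v = i), degVec a v ≤ a.degree := by
  classical
  unfold degVec
  simp only [Finsupp.sum]
  rw [Finset.sum_comm]
  have h1 : ∀ e ∈ a.support,
      ∑ v ∈ Finset.univ.filter (fun v => p v = i), a e * mult v (e : Sym2 V) ≤ a e := by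
    intro e _
    rw [← Finset.mul_sum]
    have key : ∀ s : Sym2 V, s ∈ G.edgeSet →
        ∑ v ∈ Finset.univ.filter (fun v => p v = i), mult v s ≤ 1 := by
      intro s
      induction s using Sym2.inductionOn with
      | hf x y =>
        intro hs
        have := (hAdj x y).mp ((SimpleGraph.mem_edgeSet G).mp hs)
        simp only [mult_mk, Finset.sum_add_distrib, Finset.sum_ite_eq, Finset.mem_filter,
          Finset.mem_univ, true_and]
        by_cases hx : p x = i <;> by_cases hy : p y = i <;> simp_all
    have hb := key (e : Sym2 V) e.2
    calc a e * ∑ v ∈ Finset.univ.filter (fun v => p v = i), mult v (e : Sym2 V)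
        ≤ a e * 1 := Nat.mul_le_mul_left _ hb
      _ = a e := mul_one _
  calc ∑ e ∈ a.support, ∑ v ∈ Finset.univ.filter (fun v => p v = i), a e * mult v (e : Sym2 V)
      ≤ ∑ e ∈ a.support, a e := Finset.sum_le_sum h1
    _ = a.degree := rfl

end degVec

section chars
variable {K : Type*} [Field K] [Fintype K] [Fintype V] {G : SimpleGraph V}

/-- the point of the toric set attached to `x`. -/
noncomputable def pt (G : SimpleGraph V) (x : V → Kˣ) : G.edgeSet → K :=
  fun e => edgeVal (fun v => (x v : K)) (e : Sym2 V)

/-- the monomial character attached to an exponent vector `a`. -/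
noncomputable def chi (G : SimpleGraph V) (a : G.edgeSet →₀ ℕ) : (V → Kˣ) → K :=
  fun x => a.prod fun e k => pt G x e ^ k

lemma chi_eq_prod_pow (a : G.edgeSet →₀ ℕ) (x : V → Kˣ) :
    chi G a x = ∏ v, (x v : K) ^ degVec a v := by
  unfold chi pt
  rw [Finsupp.prod]
  have h1 : ∀ e ∈ a.support,
      edgeVal (fun v => (x v : K)) (e : Sym2 V) ^ a e
        = ∏ v, (x v : K) ^ (a e * mult v (e : Sym2 V)) := by
    intro e _
    rw [edgeVal_eq_prod, ← Finset.prod_pow]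
    exact Finset.prod_congr rfl fun v _ => by rw [← pow_mul, mul_comm]
  rw [Finset.prod_congr rfl h1, Finset.prod_comm]
  refine Finset.prod_congr rfl fun v _ => ?_
  rw [Finset.prod_pow_eq_pow_sum]
  rfl

/-- `chi` as a monoid hom. -/
noncomputable def chiHom (G : SimpleGraph V) (a : G.edgeSet →₀ ℕ) : (V → Kˣ) →* K where
  toFun := chi G a
  map_one' := by
    simp only [chi_eq_prod_pow]
    simp
  map_mul' x y := by
    simp only [chi_eq_prod_pow, ← Finset.prod_mul_distrib]
    exact Finset.prod_congr rfl fun v _ => by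
      simp [mul_pow]

/-- the character attached to a vector of residues. -/
noncomputable def chiHat (G : SimpleGraph V) (t : ℕ) (c : V → ZMod t) : (V → Kˣ) → K :=
  fun x => ∏ v, (x v : K) ^ (c v).val

lemma chi_eq_chiHat (a : G.edgeSet →₀ ℕ) :
    chi G a = chiHat (K := K) G (Nat.card Kˣ)
      (fun v => (degVec a v : ZMod (Nat.card Kˣ))) := by
  haveI : Fintype Kˣ := Fintype.ofFinite _
  funext x
  rw [chi_eq_prod_pow]
  refine Finset.prod_congr rfl fun v _ => ?_
  rw [ZMod.val_natCast, Nat.card_eq_fintype_card]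
  conv_lhs => rw [← Units.val_pow_eq_pow_val, ← pow_mod_card, Units.val_pow_eq_pow_val]

lemma chiHat_injective (G : SimpleGraph V) :
    Function.Injective (chiHat G (Nat.card Kˣ) (K := K)) := by
  haveI : Fintype Kˣ := Fintype.ofFinite _
  haveI : NeZero (Nat.card Kˣ) := ⟨Nat.card_pos.ne'⟩
  intro c c' h
  obtain ⟨g, hg⟩ := IsCyclic.exists_generator (α := Kˣ)
  funext v
  have hx := congrFun h (fun w => if w = v then g else 1)
  unfold chiHat at hx
  rw [Finset.prod_eq_single v (fun w _ hw => by simp [hw]) (by simp),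
      Finset.prod_eq_single v (fun w _ hw => by simp [hw]) (by simp)] at hx
  simp only [if_pos rfl] at hx
  have hu : g ^ (c v).val = g ^ (c' v).val := by
    apply Units.ext
    simpa [Units.val_pow_eq_pow_val] using hx
  have horder : orderOf g = Nat.card Kˣ := orderOf_eq_card_of_forall_mem_zpowers hg
  have hmod := (pow_eq_pow_iff_modEq.mp hu)
  rw [horder] at hmod
  have : (c v).val = (c' v).val := by
    rw [Nat.ModEq] at hmod
    rwa [Nat.mod_eq_of_lt (ZMod.val_lt _), Nat.mod_eq_of_lt (ZMod.val_lt _)] at hmod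
  exact ZMod.val_injective _ this

end chars

section partA
variable {K : Type*} [Field K] [Fintype K] [Fintype V] {G : SimpleGraph V}

/-- the set of monomial characters of degree `d`. -/
def chiSet (G : SimpleGraph V) (K : Type*) [Field K] [Fintype K] (d : ℕ) :
    Set ((V → Kˣ) → K) :=
  {g | ∃ a : G.edgeSet →₀ ℕ, a.degree = d ∧ g = chi G a}

/-- the set of achievable residue vectors in degree `d`. -/
def AchSet (G : SimpleGraph V) (t d : ℕ) : Set (V → ZMod t) :=
  {c | ∃ a : G.edgeSet →₀ ℕ, a.degree = d ∧ ∀ v, ((degVec a v : ℕ) : ZMod t) = c v}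

lemma chiSet_eq_image (G : SimpleGraph V) (d : ℕ) :
    chiSet G K d = chiHat (K := K) G (Nat.card Kˣ) '' AchSet G (Nat.card Kˣ) d := by
  ext g
  constructor
  · rintro ⟨a, ha, rfl⟩
    exact ⟨fun v => (degVec a v : ZMod (Nat.card Kˣ)), ⟨a, ha, fun v => rfl⟩,
      (chi_eq_chiHat a).symm⟩
  · rintro ⟨c, ⟨a, ha, hc⟩, rfl⟩
    refine ⟨a, ha, ?_⟩
    have hc' : c = fun v => (degVec a v : ZMod (Nat.card Kˣ)) := funext fun v => (hc v).symm
    rw [hc']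
    exact (chi_eq_chiHat a).symm

lemma achSet_finite (G : SimpleGraph V) (d : ℕ) :
    (AchSet (V := V) G (Nat.card Kˣ) d).Finite := by
  haveI : NeZero (Nat.card Kˣ) := ⟨Nat.card_pos.ne'⟩
  exact Set.toFinite _

lemma chiSet_finite (G : SimpleGraph V) (d : ℕ) : (chiSet G K d).Finite := by
  rw [chiSet_eq_image]
  exact (achSet_finite G d).image _

lemma chiSet_linearIndependent (G : SimpleGraph V) (d : ℕ) :
    LinearIndependent K (Subtype.val : chiSet G K d → ((V → Kˣ) → K)) := by
  classical
  have hex : ∀ g : chiSet G K d, ∃ h : (V → Kˣ) →* K, ⇑h = g.1 := by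
    rintro ⟨g, a, ha, rfl⟩
    exact ⟨chiHom G a, rfl⟩
  choose φ hφ using hex
  have hinj : Function.Injective φ := by
    intro a b hab
    apply Subtype.ext
    rw [← hφ a, ← hφ b, hab]
  have h := (linearIndependent_monoidHom (V → Kˣ) K).comp φ hinj
  have heq : (fun f : (V → Kˣ) →* K => ⇑f) ∘ φ = (Subtype.val : chiSet G K d → _) :=
    funext fun g => hφ g
  rwa [heq] at h

/-- evaluation of a degree-`d` form at all the points of the toric set. -/
noncomputable def evalMap (G : SimpleGraph V) (K : Type*) [Field K] [Fintype K] (d : ℕ) :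
    (homogeneousSubmodule G.edgeSet K d) →ₗ[K] ((V → Kˣ) → K) where
  toFun f := fun x => eval (pt G x) f.1
  map_add' f g := funext fun x => by simp
  map_smul' c f := funext fun x => by
    simp [MvPolynomial.smul_eq_C_mul]

lemma ker_evalMap (G : SimpleGraph V) (d : ℕ) :
    LinearMap.ker (evalMap G K d)
      = Submodule.comap (homogeneousSubmodule G.edgeSet K d).subtype
          ((vanishingIdeal K G).restrictScalars K) := by
  ext f
  simp only [LinearMap.mem_ker, Submodule.mem_comap, Submodule.restrictScalars_mem,
    Submodule.subtype_apply]
  constructor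
  · intro h
    apply Ideal.subset_span
    refine ⟨⟨d, (mem_homogeneousSubmodule _ _).mp f.2⟩, fun x => ?_⟩
    exact congrFun h x
  · intro h
    funext x
    have hle : vanishingIdeal K G ≤ RingHom.ker (eval (pt G x)) := by
      unfold _root_.vanishingIdeal
      rw [Ideal.span_le]
      rintro g ⟨-, hg⟩
      exact hg x
    show eval (pt G x) (f : MvPolynomial G.edgeSet K) = 0
    exact RingHom.mem_ker.mp (hle h)

lemma range_evalMap (G : SimpleGraph V) (d : ℕ) :
    LinearMap.range (evalMap G K d) = Submodule.span K (chiSet G K d) := by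
  apply le_antisymm
  · rintro - ⟨f, rfl⟩
    have hf : (f : MvPolynomial G.edgeSet K).IsHomogeneous d :=
      (mem_homogeneousSubmodule _ _).mp f.2
    have hexp : evalMap G K d f
        = ∑ a ∈ (f : MvPolynomial G.edgeSet K).support,
            coeff a (f : MvPolynomial G.edgeSet K) • chi G a := by
      funext x
      rw [Finset.sum_apply]
      show eval (pt G x) (f : MvPolynomial G.edgeSet K) = _
      conv_lhs => rw [(f : MvPolynomial G.edgeSet K).as_sum]
      rw [map_sum]
      refine Finset.sum_congr rfl fun a _ => ?_
      rw [eval_monomial]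
      rfl
    rw [hexp]
    refine Submodule.sum_mem _ fun a ha => Submodule.smul_mem _ _ (Submodule.subset_span ?_)
    refine ⟨a, ?_, rfl⟩
    rw [Finsupp.degree_eq_weight_one]
    exact hf (mem_support_iff.mp ha)
  · rw [Submodule.span_le]
    rintro - ⟨a, ha, rfl⟩
    refine ⟨⟨monomial a 1, (mem_homogeneousSubmodule _ _).mpr
      (isHomogeneous_monomial 1 ha)⟩, ?_⟩
    funext x
    show eval (pt G x) (monomial a 1) = _
    rw [eval_monomial, one_mul]
    rfl

set_option maxHeartbeats 1000000 in
lemma hilbFn_eq_ncard (G : SimpleGraph V) (d : ℕ) :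
    hilbFn K G d = (AchSet (V := V) G (Nat.card Kˣ) d).ncard := by
  classical
  have h1 : hilbFn K G d = Module.finrank K
      ((homogeneousSubmodule G.edgeSet K d) ⧸ LinearMap.ker (evalMap G K d)) := by
    rw [hilbFn, ker_evalMap]
  rw [h1, (LinearMap.quotKerEquivRange (evalMap G K d)).finrank_eq, range_evalMap]
  haveI : Fintype (chiSet G K d) := (chiSet_finite G d).fintype
  have h3 : (chiSet G K d).toFinset.card = (chiSet G K d).ncard :=
    (Set.ncard_eq_toFinset_card' _).symm
  have h2 : (chiSet G K d).ncard = (AchSet (V := V) G (Nat.card Kˣ) d).ncard := by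
    rw [chiSet_eq_image, Set.ncard_image_of_injective _ (chiHat_injective G)]
  rw [@finrank_span_set_eq_card K _ _ _ _ _ (chiSet G K d) this
    (chiSet_linearIndependent G d)]
  rw [h3]
  rw [h2]

end partA

section partB
variable {ι : Type*} [DecidableEq ι]

lemma exists_distribution (g : ι → ℕ) (s : Finset ι) :
    ∀ M : ℕ, M ≤ ∑ i ∈ s, g i →
      ∃ k : ι → ℕ, (∀ i, k i ≤ g i) ∧ (∀ i ∉ s, k i = 0) ∧ ∑ i ∈ s, k i = M := by
  classical
  induction s using Finset.induction_on with
  | empty =>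
    intro M hM
    simp only [Finset.sum_empty, Nat.le_zero] at hM
    exact ⟨fun _ => 0, fun i => Nat.zero_le _, fun i _ => rfl, by simp [hM]⟩
  | insert a s' ha ih =>
    intro M hM
    rw [Finset.sum_insert ha] at hM
    obtain ⟨k', hk'le, hk'out, hk'sum⟩ := ih (M - min M (g a)) (by omega)
    refine ⟨fun i => if i = a then min M (g a) else k' i, ?_, ?_, ?_⟩
    · intro i
      by_cases hi : i = a
      · subst hi; simp only [if_pos rfl]; exact min_le_right _ _
      · simp only [if_neg hi]; exact hk'le i
    · intro i hi
      rw [Finset.mem_insert] at hi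
      push_neg at hi
      simp [hi.1, hk'out i hi.2]
    · rw [Finset.sum_insert ha, if_pos rfl]
      have : ∀ i ∈ s', (if i = a then min M (g a) else k' i) = k' i := by
        intro i hi
        rw [if_neg]; rintro rfl; exact ha hi
      rw [Finset.sum_congr rfl this, hk'sum]
      omega

variable [Fintype V] [Fintype ι] {G : SimpleGraph V}

lemma degree_add' {σ : Type*} (a b : σ →₀ ℕ) : (a + b).degree = a.degree + b.degree := by
  simp [Finsupp.degree_eq_weight_one]

lemma degree_single' {σ : Type*} (e : σ) (k : ℕ) : (Finsupp.single e k).degree = k := by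
  classical
  simp [Finsupp.degree_eq_weight_one, Finsupp.weight_apply, Finsupp.sum_single_index]

lemma exists_realization (p : V → ι) (hAdj : ∀ x y, G.Adj x y ↔ p x ≠ p y)
    (hι : 2 ≤ Fintype.card ι) (d : ℕ) :
    ∀ D : V → ℕ, (∑ v, D v = 2 * d) →
      (∀ i, ∑ v ∈ Finset.univ.filter (fun v => p v = i), D v ≤ d) →
      ∃ a : G.edgeSet →₀ ℕ, a.degree = d ∧ ∀ v, degVec a v = D v := by
  classical
  induction d with
  | zero =>
    intro D hsum _
    refine ⟨0, by simp [Finsupp.degree_eq_weight_one], fun v => ?_⟩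
    have : D v = 0 := by
      have := (by simpa using hsum : ∀ i, D i = 0) v
      exact this
    simp [degVec, this]
  | succ d ih =>
    intro D hsum hpart
    set T : ι → ℕ := fun i => ∑ v ∈ Finset.univ.filter (fun v => p v = i), D v with hT
    have hTsum : ∑ i, T i = 2 * (d + 1) := by
      rw [hT, Finset.sum_fiberwise, hsum]
    -- choose the part with the largest degree sum
    haveI : Nonempty ι := Fintype.card_pos_iff.mp (by omega)
    obtain ⟨i₁, -, hi₁⟩ := Finset.exists_max_image Finset.univ T
      ⟨Classical.arbitrary ι, Finset.mem_univ _⟩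
    have hi₁le : ∀ i, T i ≤ T i₁ := fun i => hi₁ i (Finset.mem_univ i)
    -- the second largest part
    have herane : (Finset.univ.erase i₁).Nonempty := by
      rw [← Finset.card_pos, Finset.card_erase_of_mem (Finset.mem_univ _), Finset.card_univ]
      omega
    obtain ⟨i₂, hi₂mem, hi₂⟩ := Finset.exists_max_image (Finset.univ.erase i₁) T herane
    have hne21 : i₂ ≠ i₁ := (Finset.mem_erase.mp hi₂mem).1
    have herase1 : T i₁ + ∑ i ∈ Finset.univ.erase i₁, T i = 2 * (d + 1) := by
      rw [Finset.add_sum_erase _ _ (Finset.mem_univ i₁), hTsum]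
    have herase2 : T i₂ + ∑ i ∈ (Finset.univ.erase i₁).erase i₂, T i
        = ∑ i ∈ Finset.univ.erase i₁, T i := Finset.add_sum_erase _ _ hi₂mem
    -- positivity
    have hT1pos : 0 < T i₁ := by
      by_contra h
      push_neg at h
      have hz : ∀ i ∈ Finset.univ, T i = 0 := fun i _ => by have := hi₁le i; omega
      rw [Finset.sum_eq_zero hz] at hTsum
      omega
    have hT2pos : 0 < T i₂ := by
      by_contra h
      push_neg at h
      have hz : ∀ i ∈ Finset.univ.erase i₁, T i = 0 := fun i hi => by
        have := hi₂ i hi; omega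
      have h0 : ∑ i ∈ Finset.univ.erase i₁, T i = 0 := Finset.sum_eq_zero hz
      have h1 : T i₁ ≤ d + 1 := hpart i₁
      omega
    -- pick vertices of positive degree
    obtain ⟨u, humem, hu⟩ : ∃ u ∈ Finset.univ.filter (fun v => p v = i₁), D u ≠ 0 := by
      apply Finset.exists_ne_zero_of_sum_ne_zero
      have h1 : T i₁ ≠ 0 := by omega
      simpa [hT] using h1
    obtain ⟨w, hwmem, hw⟩ : ∃ w ∈ Finset.univ.filter (fun v => p v = i₂), D w ≠ 0 := by
      apply Finset.exists_ne_zero_of_sum_ne_zero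
      have h2 : T i₂ ≠ 0 := by omega
      simpa [hT] using h2
    have hpu : p u = i₁ := (Finset.mem_filter.mp humem).2
    have hpw : p w = i₂ := (Finset.mem_filter.mp hwmem).2
    have hpuw : p u ≠ p w := by rw [hpu, hpw]; exact fun h => hne21 h.symm
    have huw : u ≠ w := fun h => hpuw (by rw [h])
    have hedge : s(u, w) ∈ G.edgeSet := (SimpleGraph.mem_edgeSet G).mpr ((hAdj u w).mpr hpuw)
    set e : G.edgeSet := ⟨s(u, w), hedge⟩ with he
    -- reduced degree vector
    set D' : V → ℕ := fun v => D v - (if u = v then 1 else 0) - (if w = v then 1 else 0) with hD'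
    have hD'add : ∀ v, D' v + mult v (s(u, w)) = D v := by
      intro v
      simp only [hD', mult_mk]
      by_cases h1 : u = v
      · subst h1
        rw [if_pos rfl, if_neg (fun hh => huw hh.symm)]
        omega
      · by_cases h2 : w = v
        · subst h2
          rw [if_neg h1, if_pos rfl]
          omega
        · rw [if_neg h1, if_neg h2]
          omega
    have hD'sum : ∑ v, D' v = 2 * d := by
      have h2 : ∑ v, (D' v + mult v (s(u, w))) = 2 * (d + 1) := by
        rw [Finset.sum_congr rfl fun v _ => hD'add v, hsum]
      rw [Finset.sum_add_distrib, sum_mult] at h2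
      omega
    have hmultpart : ∀ i, ∑ v ∈ Finset.univ.filter (fun v => p v = i), mult v (s(u, w))
        = (if p u = i then 1 else 0) + (if p w = i then 1 else 0) := by
      intro i
      simp only [mult_mk, Finset.sum_add_distrib, Finset.sum_ite_eq, Finset.mem_filter,
        Finset.mem_univ, true_and]
    have hpartsplit : ∀ i, (∑ v ∈ Finset.univ.filter (fun v => p v = i), D' v)
        + ((if p u = i then 1 else 0) + (if p w = i then 1 else 0)) = T i := by
      intro i
      rw [← hmultpart i, ← Finset.sum_add_distrib, hT]
      exact Finset.sum_congr rfl fun v _ => hD'add v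
    have hpartT : ∀ i, T i ≤ d + 1 := fun i => hpart i
    have hD'part : ∀ i, ∑ v ∈ Finset.univ.filter (fun v => p v = i), D' v ≤ d := by
      intro i
      have hsp := hpartsplit i
      by_cases h1 : i = i₁
      · have hw1 : p w ≠ i := by rw [hpw, h1]; exact hne21
        have hu1 : p u = i := by rw [hpu, h1]
        rw [if_pos hu1, if_neg hw1] at hsp
        have := hpartT i
        omega
      · by_cases h2 : i = i₂
        · have hu2 : p u ≠ i := by rw [hpu, h2]; exact fun hh => hne21 hh.symm
          have hw2 : p w = i := by rw [hpw, h2]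
          rw [if_neg hu2, if_pos hw2] at hsp
          have := hpartT i
          omega
        · -- third part
          have hu3 : p u ≠ i := by rw [hpu]; exact fun hh => h1 hh.symm
          have hw3 : p w ≠ i := by rw [hpw]; exact fun hh => h2 hh.symm
          rw [if_neg hu3, if_neg hw3] at hsp
          have hi_mem : i ∈ Finset.univ.erase i₁ := Finset.mem_erase.mpr ⟨h1, Finset.mem_univ _⟩
          have hle2 : T i ≤ T i₂ := hi₂ i hi_mem
          have hi_mem2 : i ∈ (Finset.univ.erase i₁).erase i₂ := Finset.mem_erase.mpr ⟨h2, hi_mem⟩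
          have hle3 : T i ≤ ∑ j ∈ (Finset.univ.erase i₁).erase i₂, T j :=
            Finset.single_le_sum (fun j _ => Nat.zero_le _) hi_mem2
          have h21 : T i₂ ≤ T i₁ := hi₁le i₂
          have h1d : T i₁ ≤ d + 1 := hpartT i₁
          omega
    obtain ⟨a', ha'deg, ha'vec⟩ := ih D' hD'sum hD'part
    refine ⟨a' + Finsupp.single e 1, ?_, ?_⟩
    · rw [degree_add', ha'deg, degree_single']
    · intro v
      rw [degVec_add, degVec_single, ha'vec v, one_mul]
      exact hD'add v

lemma key_ineq (p : V → ι) (hp : Function.Surjective p) (hr : 3 ≤ Fintype.card ι)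
    (hn : 4 ≤ Fintype.card V) (m d : ℕ)
    (hd1 : ∀ i, (Finset.univ.filter fun v => p v = i).card * m ≤ d)
    (hd2 : ((Fintype.card V - 1) * m + 1) / 2 ≤ d) :
    2 * d + Fintype.card ι * m ≤ Fintype.card ι * d + m := by
  classical
  set r := Fintype.card ι with hrdef
  set n := Fintype.card V with hndef
  have hrn : r ≤ n := Fintype.card_le_of_surjective p hp
  by_cases hr4 : 4 ≤ r
  · have h2d : (n - 1) * m ≤ 2 * d := by omega
    have hX : (r - 1) * m ≤ (n - 1) * m := Nat.mul_le_mul_right m (by omega)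
    have h1 : 2 * d ≤ (r - 2) * d := Nat.mul_le_mul_right d (by omega)
    have hsplit : (r - 2) * d + 2 * d = r * d := by
      rw [← Nat.add_mul, Nat.sub_add_cancel (by omega)]
    have hsplit2 : (r - 1) * m + 1 * m = r * m := by
      rw [← Nat.add_mul, Nat.sub_add_cancel (by omega)]
    omega
  · have hr3 : r = 3 := by omega
    obtain ⟨i, hi⟩ : ∃ i, 2 ≤ (Finset.univ.filter fun v => p v = i).card := by
      by_contra h
      push_neg at h
      have hcard : (Finset.univ : Finset V).card
          = ∑ i : ι, (Finset.univ.filter fun v => p v = i).card :=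
        Finset.card_eq_sum_card_fiberwise fun v _ => Finset.mem_univ (p v)
      have hle : ∑ i : ι, (Finset.univ.filter fun v => p v = i).card
          ≤ ∑ _i : ι, 1 := Finset.sum_le_sum fun i _ => by have := h i; omega
      rw [Finset.sum_const, smul_eq_mul, mul_one] at hle
      rw [Finset.card_univ, ← hndef] at hcard
      rw [Finset.card_univ, ← hrdef] at hle
      omega
    have h2m : 2 * m ≤ (Finset.univ.filter fun v => p v = i).card * m :=
      Nat.mul_le_mul_right m hi
    have := hd1 i
    rw [hr3]
    omega

lemma achievable_of_le (p : V → ι) (hp : Function.Surjective p)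
    (hAdj : ∀ x y, G.Adj x y ↔ p x ≠ p y)
    (hr : 3 ≤ Fintype.card ι) (hn : 4 ≤ Fintype.card V)
    (t : ℕ) (ht : 1 ≤ t) (d : ℕ)
    (hd1 : ∀ i, (Finset.univ.filter fun v => p v = i).card * (t - 1) ≤ d)
    (hd2 : ((Fintype.card V - 1) * (t - 1) + 1) / 2 ≤ d)
    (c : V → ZMod t) (hc : ∑ v, c v = ((2 * d : ℕ) : ZMod t)) :
    c ∈ AchSet G t d := by
  classical
  haveI : NeZero t := ⟨by omega⟩
  set m := t - 1 with hm
  set b : V → ℕ := fun v => (c v).val with hb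
  have hbm : ∀ v, b v ≤ m := fun v => by
    simp only [hb]
    have := ZMod.val_lt (c v); omega
  have hbc : ∀ v, ((b v : ℕ) : ZMod t) = c v := fun v => by
    simp only [hb]
    exact ZMod.natCast_rightInverse (c v)
  -- the sum of the residues is congruent to 2d
  have hcong : (∑ v, b v) ≡ 2 * d [MOD t] := by
    rw [← ZMod.natCast_eq_natCast_iff, Nat.cast_sum,
      Finset.sum_congr rfl fun v _ => hbc v]
    exact hc
  have hnm : (Fintype.card V) * m = (Fintype.card V - 1) * m + 1 * m := by
    rw [← Nat.add_mul, Nat.sub_add_cancel (by omega)]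
  have hSbnm : ∑ v, b v ≤ Fintype.card V * m := by
    have := Finset.sum_le_card_nsmul Finset.univ b m fun v _ => hbm v
    rwa [Finset.card_univ, smul_eq_mul] at this
  have h2dX : (Fintype.card V - 1) * m ≤ 2 * d := by omega
  have hSb2d : ∑ v, b v ≤ 2 * d := by
    by_contra hgt
    push_neg at hgt
    have hdvd : t ∣ ∑ v, b v - 2 * d := (Nat.modEq_iff_dvd' (by omega)).mp hcong.symm
    have hge : t ≤ ∑ v, b v - 2 * d := Nat.le_of_dvd (by omega) hdvd
    omega
  have hdvd2 : t ∣ 2 * d - ∑ v, b v := (Nat.modEq_iff_dvd' hSb2d).mp hcong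
  set Kk := (2 * d - ∑ v, b v) / t with hKk
  have hKeq : t * Kk + ∑ v, b v = 2 * d := by
    rw [hKk, Nat.mul_div_cancel' hdvd2]
    omega
  set B : ι → ℕ := fun i => ∑ v ∈ Finset.univ.filter (fun v => p v = i), b v with hB
  have hBsum : ∑ i, B i = ∑ v, b v := by
    rw [hB]; exact Finset.sum_fiberwise _ _ _
  have hBm : ∀ i, B i ≤ (Finset.univ.filter fun v => p v = i).card * m := fun i => by
    have := Finset.sum_le_card_nsmul (Finset.univ.filter fun v => p v = i) b m
      fun v _ => hbm v
    rwa [smul_eq_mul] at this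
  have hBd : ∀ i, B i ≤ d := fun i => le_trans (hBm i) (hd1 i)
  set g : ι → ℕ := fun i => (d - B i) / t with hg
  -- key counting step : Kk ≤ ∑ g
  have hKg : Kk ≤ ∑ i, g i := by
    by_contra hlt
    push_neg at hlt
    set s : ι → ℕ := fun i => (d - B i) % t with hs
    have hdm : ∀ i, t * g i + s i = d - B i := fun i => Nat.div_add_mod _ _
    have hE1 : t * ∑ i, g i + ∑ i, s i = ∑ i, (d - B i) := by
      rw [Finset.mul_sum, ← Finset.sum_add_distrib]
      exact Finset.sum_congr rfl fun i _ => hdm i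
    have hE2 : ∑ i, (d - B i) + ∑ i, B i = Fintype.card ι * d := by
      rw [← Finset.sum_add_distrib]
      rw [Finset.sum_congr rfl fun i _ => Nat.sub_add_cancel (hBd i)]
      rw [Finset.sum_const, Finset.card_univ, smul_eq_mul]
    have hsm : ∀ i, s i ≤ m := fun i => by
      simp only [hs]
      have := Nat.mod_lt (d - B i) (show 0 < t by omega)
      omega
    have hS : ∑ i, s i ≤ Fintype.card ι * m := by
      have := Finset.sum_le_card_nsmul Finset.univ s m fun i _ => hsm i
      rwa [Finset.card_univ, smul_eq_mul] at this
    have hkey := key_ineq p hp hr hn m d hd1 hd2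
    have htK : t * (∑ i, g i) + t ≤ t * Kk := by
      have : t * (∑ i, g i + 1) ≤ t * Kk := Nat.mul_le_mul_left t (by omega)
      rwa [Nat.mul_add, mul_one] at this
    omega
  -- distribute the extra degrees
  obtain ⟨k, hkle, -, hksum⟩ := exists_distribution g Finset.univ Kk (by simpa using hKg)
  choose rep hrep using hp
  set D : V → ℕ := fun v => b v + t * (if v = rep (p v) then k (p v) else 0) with hD
  have hDpart : ∀ i, ∑ v ∈ Finset.univ.filter (fun v => p v = i), D v = B i + t * k i := by
    intro i
    rw [hD]
    rw [Finset.sum_add_distrib, ← Finset.mul_sum]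
    have hcongr : ∀ v ∈ Finset.univ.filter (fun v => p v = i),
        (if v = rep (p v) then k (p v) else 0) = (if v = rep i then k i else 0) := by
      intro v hv
      rw [(Finset.mem_filter.mp hv).2]
    rw [Finset.sum_congr rfl hcongr, Finset.sum_ite_eq' _ (rep i) (fun _ => k i)]
    simp [hB, hrep i]
  have hDsum : ∑ v, D v = 2 * d := by
    rw [← Finset.sum_fiberwise Finset.univ p D]
    rw [Finset.sum_congr rfl fun i _ => hDpart i]
    rw [Finset.sum_add_distrib, ← Finset.mul_sum, hksum, hBsum]
    omega
  have hDle : ∀ i, ∑ v ∈ Finset.univ.filter (fun v => p v = i), D v ≤ d := by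
    intro i
    rw [hDpart i]
    have h1 : t * k i ≤ t * g i := Nat.mul_le_mul_left t (hkle i)
    have h2 : t * g i ≤ d - B i := by
      rw [hg, mul_comm]
      exact Nat.div_mul_le_self _ _
    have := hBd i
    omega
  obtain ⟨a, hadeg, havec⟩ := exists_realization p hAdj (by omega) d D hDsum hDle
  refine ⟨a, hadeg, fun v => ?_⟩
  rw [havec v, hD]
  push_cast
  rw [ZMod.natCast_self]
  simp only [zero_mul, add_zero]
  exact hbc v

lemma achSet_subset_slice (t d : ℕ) :
    AchSet (V := V) G t d ⊆ {c : V → ZMod t | ∑ v, c v = ((2 * d : ℕ) : ZMod t)} := by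
  rintro c ⟨a, hdeg, hvec⟩
  simp only [Set.mem_setOf_eq]
  calc ∑ v, c v = ∑ v, ((degVec a v : ℕ) : ZMod t) :=
        Finset.sum_congr rfl fun v _ => (hvec v).symm
    _ = ((∑ v, degVec a v : ℕ) : ZMod t) := (Nat.cast_sum _ _).symm
    _ = ((2 * d : ℕ) : ZMod t) := by rw [sum_degVec, hdeg]

lemma mod_eq_of_cast_eq {t : ℕ} (ht : 2 ≤ t) {N mm : ℕ} (hmm : mm < t)
    (h : ((N : ℕ) : ZMod t) = ((mm : ℕ) : ZMod t)) : mm ≤ N := by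
  have hmod := (ZMod.natCast_eq_natCast_iff _ _ _).mp h
  have h1 : N % t = mm % t := hmod
  rw [Nat.mod_eq_of_lt hmm] at h1
  have := Nat.mod_le N t
  omega

lemma not_achievable_case1 (p : V → ι) (hp : Function.Surjective p)
    (hAdj : ∀ x y, G.Adj x y ↔ p x ≠ p y)
    (hι : 2 ≤ Fintype.card ι) (t d : ℕ) (ht : 2 ≤ t) (i₀ : ι)
    (hlt : d < (Finset.univ.filter fun v => p v = i₀).card * (t - 1)) :
    ∃ c : V → ZMod t, (∑ v, c v = ((2 * d : ℕ) : ZMod t))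
      ∧ c ∉ AchSet (V := V) G t d := by
  classical
  set m := t - 1 with hm
  set α₀ := (Finset.univ.filter fun v => p v = i₀).card with hα₀
  obtain ⟨i₁, hi₁⟩ := Fintype.exists_ne_of_one_lt_card (by omega) i₀
  obtain ⟨w₀, hw₀⟩ := hp i₁
  have hw₀i₀ : ¬ p w₀ = i₀ := by rw [hw₀]; exact hi₁
  set c : V → ZMod t := fun v => if p v = i₀ then ((m : ℕ) : ZMod t)
    else if v = w₀ then ((2 * d : ℕ) : ZMod t) - ((α₀ * m : ℕ) : ZMod t) else 0 with hc
  refine ⟨c, ?_, ?_⟩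
  · rw [← Finset.sum_filter_add_sum_filter_not Finset.univ (fun v => p v = i₀)]
    have h1 : ∑ v ∈ Finset.univ.filter (fun v => p v = i₀), c v
        = ((α₀ * m : ℕ) : ZMod t) := by
      simp only [hc]
      rw [Finset.sum_congr rfl fun v hv => if_pos (Finset.mem_filter.mp hv).2]
      rw [Finset.sum_const, Nat.cast_mul, nsmul_eq_mul, hα₀]
    have h2 : ∑ v ∈ Finset.univ.filter (fun v => ¬p v = i₀), c v
        = ((2 * d : ℕ) : ZMod t) - ((α₀ * m : ℕ) : ZMod t) := by
      simp only [hc]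
      rw [Finset.sum_congr rfl fun v hv => if_neg (Finset.mem_filter.mp hv).2]
      rw [Finset.sum_ite_eq' (Finset.univ.filter (fun v => ¬p v = i₀)) w₀]
      rw [if_pos (show w₀ ∈ Finset.univ.filter (fun v => ¬ p v = i₀) from
        Finset.mem_filter.mpr ⟨Finset.mem_univ _, hw₀i₀⟩)]
    rw [h1, h2]
    ring
  · rintro ⟨a, hdeg, hvec⟩
    have hge : ∀ v ∈ Finset.univ.filter (fun v => p v = i₀), m ≤ degVec a v := by
      intro v hv
      have h := hvec v
      simp only [hc] at h
      rw [if_pos (Finset.mem_filter.mp hv).2] at h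
      exact mod_eq_of_cast_eq ht (by omega) h
    have hsum : α₀ * m ≤ ∑ v ∈ Finset.univ.filter (fun v => p v = i₀), degVec a v := by
      have := Finset.card_nsmul_le_sum _ _ _ hge
      rwa [smul_eq_mul, ← hα₀] at this
    have hle := partsum_degVec p hAdj i₀ a
    rw [hdeg] at hle
    omega

lemma not_achievable_case2 (t d : ℕ) (ht : 2 ≤ t) (hV : 1 ≤ Fintype.card V)
    (hlt : 2 * d < (Fintype.card V - 1) * (t - 1)) :
    ∃ c : V → ZMod t, (∑ v, c v = ((2 * d : ℕ) : ZMod t))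
      ∧ c ∉ AchSet (V := V) G t d := by
  classical
  set m := t - 1 with hm
  haveI : Nonempty V := Fintype.card_pos_iff.mp (by omega)
  obtain ⟨v₀⟩ := ‹Nonempty V›
  set c : V → ZMod t := fun v => if v = v₀
    then ((2 * d : ℕ) : ZMod t) - (((Fintype.card V - 1) * m : ℕ) : ZMod t)
    else ((m : ℕ) : ZMod t) with hc
  refine ⟨c, ?_, ?_⟩
  · rw [← Finset.add_sum_erase _ _ (Finset.mem_univ v₀)]
    have h1 : c v₀ = ((2 * d : ℕ) : ZMod t)
        - (((Fintype.card V - 1) * m : ℕ) : ZMod t) := by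
      simp only [hc, if_pos rfl]
    have h2 : ∑ v ∈ Finset.univ.erase v₀, c v
        = (((Fintype.card V - 1) * m : ℕ) : ZMod t) := by
      simp only [hc]
      rw [Finset.sum_congr rfl fun v hv => if_neg (Finset.mem_erase.mp hv).1]
      rw [Finset.sum_const, Finset.card_erase_of_mem (Finset.mem_univ _), Finset.card_univ,
        Nat.cast_mul, nsmul_eq_mul]
    rw [h1, h2]
    ring
  · rintro ⟨a, hdeg, hvec⟩
    have hge : ∀ v ∈ Finset.univ.erase v₀, m ≤ degVec a v := by
      intro v hv
      have h := hvec v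
      simp only [hc] at h
      rw [if_neg (Finset.mem_erase.mp hv).1] at h
      exact mod_eq_of_cast_eq ht (by omega) h
    have hsum : (Fintype.card V - 1) * m ≤ ∑ v ∈ Finset.univ.erase v₀, degVec a v := by
      have := Finset.card_nsmul_le_sum _ _ _ hge
      rwa [smul_eq_mul, Finset.card_erase_of_mem (Finset.mem_univ _), Finset.card_univ] at this
    have hle : ∑ v ∈ Finset.univ.erase v₀, degVec a v ≤ ∑ v, degVec a v :=
      Finset.sum_le_sum_of_subset (Finset.erase_subset _ _)
    rw [sum_degVec, hdeg] at hle
    omega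

/-- the slice of residue vectors with fixed total. -/
noncomputable def sliceEquiv (t : ℕ) (v₀ : V) (s : ZMod t) :
    {c : V → ZMod t // ∑ v, c v = s} ≃ ({v : V // v ≠ v₀} → ZMod t) where
  toFun c w := c.1 w.1
  invFun g := ⟨fun v => if h : v = v₀ then s - ∑ w : {v : V // v ≠ v₀}, g w else g ⟨v, h⟩, by
    rw [← Finset.add_sum_erase _ _ (Finset.mem_univ v₀), dif_pos rfl]
    have h2 : ∑ v ∈ Finset.univ.erase v₀,
        (if h : v = v₀ then s - ∑ w : {v : V // v ≠ v₀}, g w else g ⟨v, h⟩)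
        = ∑ w : {v : V // v ≠ v₀}, g w := by
      rw [Finset.sum_subtype (p := fun v => v ≠ v₀) (Finset.univ.erase v₀)
        (fun x => by simp [Finset.mem_erase]) (fun v => if h : v = v₀
          then s - ∑ w : {v : V // v ≠ v₀}, g w else g ⟨v, h⟩)]
      exact Finset.sum_congr rfl fun w _ => by rw [dif_neg w.2]
    rw [h2]
    ring⟩
  left_inv c := by
    obtain ⟨cf, hcf⟩ := c
    apply Subtype.ext
    funext v
    show (if h : v = v₀ then s - ∑ w : {v : V // v ≠ v₀}, cf w.1 else cf v) = cf v
    by_cases h : v = v₀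
    · subst h
      rw [dif_pos rfl]
      have hsplit : cf v + ∑ w : {x : V // x ≠ v}, cf w.1 = s := by
        rw [← hcf, ← Finset.add_sum_erase _ _ (Finset.mem_univ v)]
        congr 1
        exact (Finset.sum_subtype (p := fun x => x ≠ v) (Finset.univ.erase v)
          (fun x => by simp [Finset.mem_erase]) cf).symm
      rw [← hsplit, add_sub_cancel_right]
    · rw [dif_neg h]
  right_inv g := by
    funext w
    simp only [dif_neg w.2]

lemma card_slice (t : ℕ) [NeZero t] (hV : 1 ≤ Fintype.card V) (s : ZMod t) :
    {c : V → ZMod t | ∑ v, c v = s}.ncard = t ^ (Fintype.card V - 1) := by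
  classical
  haveI : Nonempty V := Fintype.card_pos_iff.mp (by omega)
  obtain ⟨v₀⟩ := ‹Nonempty V›
  rw [← Nat.card_coe_set_eq]
  have he : Nat.card {c : V → ZMod t | ∑ v, c v = s}
      = Nat.card ({v : V // v ≠ v₀} → ZMod t) := by
    apply Nat.card_congr
    exact (Equiv.subtypeEquivRight (fun c => by simp [Set.mem_setOf_eq])).trans
      (sliceEquiv t v₀ s)
  rw [he, Nat.card_eq_fintype_card, Fintype.card_fun, ZMod.card]
  congr 1
  have hcompl : Fintype.card {v : V // v ≠ v₀} = Fintype.card V - 1 := by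
    have h1 := Fintype.card_subtype_compl (fun v : V => v = v₀)
    rw [Fintype.card_subtype_eq] at h1
    exact h1
  rw [hcompl]

end partB

end Stmt8

/-- For the complete multipartite graph `G = K_{α_1,…,α_r}` with
`r ≥ 3` parts and `n ≥ 4` vertices, the Hilbert function of `S/I(X)` attains the value
`(q-1)^{n-1}` exactly in degrees `d ≥ d* = max {α_1(q-2), …, α_r(q-2), ⌈(n-1)(q-2)/2⌉}`;
that is, the Castelnuovo–Mumford regularity of `S/I(X)` is `d*`. -/
theorem statement8 {V ι K : Type*} [Fintype V] [DecidableEq V] [Fintype ι] [DecidableEq ι]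
    [Field K] [Fintype K]
    (p : V → ι) (hp : Function.Surjective p) (hr : 3 ≤ Fintype.card ι)
    (hn : 4 ≤ Fintype.card V)
    (G : SimpleGraph V) (hAdj : ∀ x y, G.Adj x y ↔ p x ≠ p y)
    (q n dstar : ℕ) (hq : q = Fintype.card K) (hncard : n = Fintype.card V)
    (hdstar : dstar =
      max (Finset.univ.sup fun i : ι => (Finset.univ.filter fun v => p v = i).card * (q - 2))
        (((n - 1) * (q - 2) + 1) / 2)) :
    ∀ d : ℕ, hilbFn K G d = (q - 1) ^ (n - 1) ↔ dstar ≤ d := by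
  classical
  intro d
  set t := Nat.card Kˣ with htdef
  have hq2 : 2 ≤ q := by rw [hq]; exact Fintype.one_lt_card
  have htq : t = q - 1 := by
    rw [htdef, Nat.card_eq_fintype_card, Fintype.card_units, hq]
  have ht1 : 1 ≤ t := by omega
  haveI : NeZero t := ⟨by omega⟩
  have htm : t - 1 = q - 2 := by omega
  have hilb : hilbFn K G d = (Stmt8.AchSet (V := V) G t d).ncard :=
    Stmt8.hilbFn_eq_ncard G d
  set S : Set (V → ZMod t) := {c | ∑ v, c v = ((2 * d : ℕ) : ZMod t)} with hS
  have hsub : Stmt8.AchSet (V := V) G t d ⊆ S := Stmt8.achSet_subset_slice (G := G) t d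
  have hslice : S.ncard = t ^ (Fintype.card V - 1) :=
    Stmt8.card_slice t (by omega) _
  have hSfin : S.Finite := Set.toFinite _
  have hqt : (q - 1) ^ (n - 1) = t ^ (Fintype.card V - 1) := by rw [htq, hncard]
  constructor
  · intro hEq
    by_contra hlt
    push_neg at hlt
    rw [hdstar] at hlt
    have hAch : Stmt8.AchSet (V := V) G t d = S := by
      apply Set.eq_of_subset_of_ncard_le hsub _ hSfin
      rw [hslice, ← hqt, ← hEq, hilb]
    rcases lt_max_iff.mp hlt with hA | hB
    · obtain ⟨i₀, -, hi₀⟩ := Finset.lt_sup_iff.mp hA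
      rcases Nat.eq_zero_or_pos (q - 2) with h0 | h0
      · rw [h0, mul_zero] at hi₀; omega
      · have ht2 : 2 ≤ t := by omega
        have hi₀' : d < (Finset.univ.filter fun v => p v = i₀).card * (t - 1) := by
          rw [htm]; exact hi₀
        obtain ⟨c, hcS, hcA⟩ := Stmt8.not_achievable_case1 (G := G) p hp hAdj
          (by omega) t d ht2 i₀ hi₀'
        exact hcA (by rw [hAch]; exact hcS)
    · rcases Nat.eq_zero_or_pos (q - 2) with h0 | h0
      · rw [h0, mul_zero] at hB; omega
      · have ht2 : 2 ≤ t := by omega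
        have hB' : 2 * d < (Fintype.card V - 1) * (t - 1) := by
          rw [htm, ← hncard]; omega
        obtain ⟨c, hcS, hcA⟩ := Stmt8.not_achievable_case2 (G := G) t d ht2
          (by omega) hB'
        exact hcA (by rw [hAch]; exact hcS)
  · intro hge
    have hd1 : ∀ i, (Finset.univ.filter fun v => p v = i).card * (t - 1) ≤ d := by
      intro i
      have h1 : (Finset.univ.filter fun v => p v = i).card * (q - 2) ≤ dstar := by
        rw [hdstar]
        have ha := Finset.le_sup
          (f := fun i : ι => (Finset.univ.filter fun v => p v = i).card * (q - 2))
          (Finset.mem_univ i)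
        exact le_trans ha (le_max_left _ _)
      rw [htm]
      omega
    have hd2 : ((Fintype.card V - 1) * (t - 1) + 1) / 2 ≤ d := by
      have h1 : ((n - 1) * (q - 2) + 1) / 2 ≤ dstar := by
        rw [hdstar]
        exact le_max_right _ _
      rw [htm, ← hncard]
      omega
    have hsup : S ⊆ Stmt8.AchSet (V := V) G t d := fun c hc =>
      Stmt8.achievable_of_le (G := G) p hp hAdj hr hn t ht1 d hd1 hd2 c hc
    rw [hilb, subset_antisymm hsub hsup, hslice, hqt]
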